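/- Fix d_s, d_a ≥ 1, a point s ∈ ℝ^{d_s}, a vector ā ∈ ℝ^{d_a}, and constants δ > 0, M > 0. Suppose g, h_1, …, h_{d_a} : ℝ^{d_s} → ℝ^{d_s} are twice continuously differentiable. Let F be any family of twice continuously differentiable feedback policies a : ℝ^{d_s} → ℝ^{d_a} such that a(s) = ā for every a ∈ F, and such that for every a ∈ F the closed-loop vector field X_a(x) = g(x) + Σ_{j=1}^{d_a} a_j(x) h_j(x) satisfies ‖X_a(x)‖ ≤ M, ‖DX_a(x)‖ ≤ M and ‖D²X_a(x)‖ ≤ M for all x ∈ ℝ^{d_s}. Set X̄ = g(s) + Σ_{j=1}^{d_a} ā_j h_j(s) and let V ⊆ ℝ^{d_s} be the linear span of the 2d_a + 2 vectors g(s), Dg(s)(X̄), h_1(s), …, h_{d_a}(s), Dh_1(s)(X̄), …, Dh_{d_a}(s)(X̄). Then dim V ≤ 2d_a + 2 and there is a constant C depending only on M such that for every a ∈ F, every differentiable curve z_a : [0, δ] → ℝ^{d_s} with z_a(0) = s and z_a'(t) = X_a(z_a(t)) for all t, and every t ∈ [0, δ], the Euclidean distance from z_a(t) to the affine subspace s +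 V is at most C δ³. In particular, the set of all states attained in time at most δ from s by all such feedback policies with common value ā at s lies within distance C δ³ of an affine subspace of dimension at most 2d_a + 2. -/

import Mathlib

set_option maxHeartbeats 1000000


/-- `ℝ^n` as a Euclidean space. -/
abbrev Esp (n : ℕ) := EuclideanSpace ℝ (Fin n)

/-- The closed-loop vector field `X_a(x) = g(x) + ∑ j, a_j(x) • h_j(x)` of a
control-affine system under a feedback policy `a`. -/
noncomputable def closedLoop {ds da : ℕ} (g : Esp ds → Esp ds)
    (h : Fin da → Esp ds → Esp ds) (a : Esp ds → Fin da → ℝ) : Esp ds → Esp ds :=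
  fun x => g x + ∑ j, a x j • h j x

/-- The span `V` of the `2·d_a + 2` vectors
`g s`, `Dg(s)(X̄)`, `h_1 s, …, h_{d_a} s`, `Dh_1(s)(X̄), …, Dh_{d_a}(s)(X̄)`,
where `X̄ = g s + ∑ j, ā_j • h_j s`. -/
noncomputable def attainSpan {ds da : ℕ} (g : Esp ds → Esp ds)
    (h : Fin da → Esp ds → Esp ds) (s : Esp ds) (abar : Fin da → ℝ) :
    Submodule ℝ (Esp ds) :=
  Submodule.span ℝ
    ({g s, fderiv ℝ g s (g s + ∑ j, abar j • h j s)} ∪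
      Set.range (fun j => h j s) ∪
      Set.range (fun j => fderiv ℝ (h j) s (g s + ∑ j, abar j • h j s)))

/-- For twice continuously differentiable `g, h_1, …, h_{d_a}` and any
family `F` of twice continuously differentiable feedback policies taking the common value
`ā` at `s`, whose closed-loop vector fields have zeroth, first and second derivatives
bounded by `M`, the span `V` of the `2·d_a + 2` vectors
`g s, Dg(s)(X̄), h_j s, Dh_j(s)(X̄)` has dimension at most `2·d_a + 2` and there is a
constant `C` depending only on `M` such that every trajectory of a closed-loop field of
the family started at `s` stays within distance `C·δ³` of the affine subspace `s + V`
for time up to `δ`. -/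
theorem stmt_0 (ds da : ℕ) (hds : 1 ≤ ds) (hda : 1 ≤ da) (M : ℝ) (hM : 0 < M) :
    ∃ C : ℝ, ∀ (s : Esp ds) (abar : Fin da → ℝ) (δ : ℝ), 0 < δ →
      ∀ (g : Esp ds → Esp ds) (h : Fin da → Esp ds → Esp ds),
        ContDiff ℝ 2 g → (∀ j, ContDiff ℝ 2 (h j)) →
        Module.finrank ℝ (attainSpan g h s abar) ≤ 2 * da + 2 ∧
        ∀ F : Set (Esp ds → Fin da → ℝ),
          (∀ a ∈ F, ContDiff ℝ 2 a ∧ a s = abar ∧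
            ∀ x, ‖closedLoop g h a x‖ ≤ M ∧ ‖fderiv ℝ (closedLoop g h a) x‖ ≤ M ∧
              ‖fderiv ℝ (fderiv ℝ (closedLoop g h a)) x‖ ≤ M) →
          ∀ a ∈ F, ∀ z : ℝ → Esp ds, z 0 = s →
            (∀ t ∈ Set.Icc (0 : ℝ) δ, HasDerivAt z (closedLoop g h a (z t)) t) →
            ∀ t ∈ Set.Icc (0 : ℝ) δ,
              Metric.infDist (z t)
                  ((fun v => s + v) '' (attainSpan g h s abar : Set (Esp ds))) ≤
                C * δ ^ 3 := by
  refine ⟨2 * M ^ 3, fun s abar δ hδ g h hg hh => ?_⟩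
  set Xbar : Esp ds := g s + ∑ j, abar j • h j s with hXbar
  set S : Set (Esp ds) :=
    ({g s, fderiv ℝ g s Xbar} ∪ Set.range (fun j => h j s) ∪
      Set.range (fun j => fderiv ℝ (h j) s Xbar)) with hSdef
  have hspan : attainSpan g h s abar = Submodule.span ℝ S := rfl
  constructor
  · -- dimension bound
    set Fv : Fin 2 ⊕ Fin da ⊕ Fin da → Esp ds :=
      Sum.elim ![g s, fderiv ℝ g s Xbar]
        (Sum.elim (fun j => h j s) (fun j => fderiv ℝ (h j) s Xbar)) with hFv
    have hS : S ⊆ Set.range Fv := by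
      rintro x ((hx | ⟨j, rfl⟩) | ⟨j, rfl⟩)
      · rcases hx with rfl | rfl
        · exact ⟨Sum.inl 0, by simp [hFv]⟩
        · exact ⟨Sum.inl 1, by simp [hFv]⟩
      · exact ⟨Sum.inr (Sum.inl j), by simp [hFv]⟩
      · exact ⟨Sum.inr (Sum.inr j), by simp [hFv]⟩
    calc Module.finrank ℝ (attainSpan g h s abar)
        ≤ Module.finrank ℝ (Submodule.span ℝ (Set.range Fv)) := by
          rw [hspan]; exact Submodule.finrank_mono (Submodule.span_mono hS)
      _ ≤ Fintype.card (Fin 2 ⊕ Fin da ⊕ Fin da) := finrank_range_le_card Fv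
      _ = 2 * da + 2 := by simp [Fintype.card_sum]; ring
  · -- main estimate
    intro F hF a haF z hz0 hz t ht
    obtain ⟨ha, has, hbd⟩ := hF a haF
    set X : Esp ds → Esp ds := closedLoop g h a with hX
    have hXc : ContDiff ℝ 2 X := by
      rw [hX]; unfold closedLoop
      exact hg.add (ContDiff.sum fun j _ => ((contDiff_pi.mp ha j).smul (hh j)))
    have hXd : Differentiable ℝ X := hXc.differentiable two_ne_zero
    have hDXd : Differentiable ℝ (fderiv ℝ X) :=
      (hXc.fderiv_right (m := 1) (by norm_num)).differentiable one_ne_zero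
    -- X(s) = Xbar
    have hXs : X s = Xbar := by
      rw [hX]; unfold closedLoop; rw [has]
    -- derivative of X at s, and membership of w in the span
    have hL : HasFDerivAt X
        (fderiv ℝ g s + ∑ j, ((a s j) • fderiv ℝ (h j) s +
          ((ContinuousLinearMap.proj j).comp (fderiv ℝ a s)).smulRight (h j s))) s := by
      rw [hX]; unfold closedLoop
      exact ((hg.differentiable two_ne_zero s).hasFDerivAt).add
        (HasFDerivAt.fun_sum fun j _ =>
          (((ContinuousLinearMap.proj (R := ℝ) (φ := fun _ : Fin da => ℝ) j).hasFDerivAt).comp s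
              ((ha.differentiable two_ne_zero s).hasFDerivAt)).smul
            ((hh j).differentiable two_ne_zero s).hasFDerivAt)
    set w : Esp ds := fderiv ℝ X s Xbar with hw
    have hweq : w = fderiv ℝ g s Xbar +
        ∑ j, ((a s j) • fderiv ℝ (h j) s Xbar + (fderiv ℝ a s Xbar j) • h j s) := by
      rw [hw, hL.fderiv]
      simp [ContinuousLinearMap.sum_apply]
    have hgsS : g s ∈ S := Or.inl (Or.inl (Or.inl rfl))
    have hdgS : fderiv ℝ g s Xbar ∈ S := Or.inl (Or.inl (Or.inr rfl))
    have hhjS : ∀ j, h j s ∈ S := fun j => Or.inl (Or.inr ⟨j, rfl⟩)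
    have hdhjS : ∀ j, fderiv ℝ (h j) s Xbar ∈ S := fun j => Or.inr ⟨j, rfl⟩
    have hXbarV : Xbar ∈ Submodule.span ℝ S := by
      rw [hXbar]
      exact Submodule.add_mem _ (Submodule.subset_span hgsS)
        (Submodule.sum_mem _ fun j _ =>
          Submodule.smul_mem _ _ (Submodule.subset_span (hhjS j)))
    have hwV : w ∈ Submodule.span ℝ S := by
      rw [hweq]
      exact Submodule.add_mem _ (Submodule.subset_span hdgS)
        (Submodule.sum_mem _ fun j _ => Submodule.add_mem _
          (Submodule.smul_mem _ _ (Submodule.subset_span (hdhjS j)))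
          (Submodule.smul_mem _ _ (Submodule.subset_span (hhjS j))))
    -- bounds
    have B0 : ∀ x, ‖X x‖ ≤ M := fun x => (hbd x).1
    have B1 : ∀ x, ‖fderiv ℝ X x‖ ≤ M := fun x => (hbd x).2.1
    have B2 : ∀ x, ‖fderiv ℝ (fderiv ℝ X) x‖ ≤ M := fun x => (hbd x).2.2
    have LX : ∀ x y : Esp ds, ‖X y - X x‖ ≤ M * ‖y - x‖ := fun x y =>
      convex_univ.norm_image_sub_le_of_norm_fderiv_le (fun u _ => hXd u)
        (fun u _ => B1 u) (Set.mem_univ x) (Set.mem_univ y)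
    have LDX : ∀ x y : Esp ds, ‖fderiv ℝ X y - fderiv ℝ X x‖ ≤ M * ‖y - x‖ := fun x y =>
      convex_univ.norm_image_sub_le_of_norm_fderiv_le (fun u _ => hDXd u)
        (fun u _ => B2 u) (Set.mem_univ x) (Set.mem_univ y)
    have hIcc : Convex ℝ (Set.Icc (0 : ℝ) δ) := convex_Icc 0 δ
    have h0mem : (0 : ℝ) ∈ Set.Icc (0 : ℝ) δ := ⟨le_refl 0, le_of_lt hδ⟩
    -- z stays close to s
    have zLip : ∀ u ∈ Set.Icc (0 : ℝ) δ, ‖z u - s‖ ≤ M * u := by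
      intro u hu
      have := hIcc.norm_image_sub_le_of_norm_hasDerivWithin_le
        (f := z) (f' := fun r => X (z r))
        (fun r hr => (hz r hr).hasDerivWithinAt) (fun r _ => B0 (z r)) h0mem hu
      rw [hz0] at this
      simpa [abs_of_nonneg hu.1] using this
    -- second-level function ψ
    set ψ : ℝ → Esp ds := fun u => X (z u) - Xbar - u • w with hψ
    have hψd : ∀ u ∈ Set.Icc (0 : ℝ) δ,
        HasDerivWithinAt ψ (fderiv ℝ X (z u) (X (z u)) - w) (Set.Icc 0 δ) u := by
      intro u hu
      have h1 : HasDerivWithinAt (fun r => X (z r)) (fderiv ℝ X (z u) (X (z u)))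
          (Set.Icc 0 δ) u :=
        (hXd (z u)).hasFDerivAt.comp_hasDerivWithinAt u ((hz u hu).hasDerivWithinAt)
      have h2 : HasDerivWithinAt (fun r : ℝ => r • w) w (Set.Icc 0 δ) u := by
        simpa using ((hasDerivAt_id u).smul_const w).hasDerivWithinAt
      exact (h1.sub_const Xbar).sub h2
    have hψbd : ∀ u ∈ Set.Icc (0 : ℝ) δ,
        ‖fderiv ℝ X (z u) (X (z u)) - w‖ ≤ 2 * M ^ 3 * δ := by
      intro u hu
      have hwv : w = fderiv ℝ X s (X s) := by rw [hw, hXs]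
      have key : fderiv ℝ X (z u) (X (z u)) - fderiv ℝ X s (X s) =
          (fderiv ℝ X (z u) - fderiv ℝ X s) (X (z u)) +
            (fderiv ℝ X s) (X (z u) - X s) := by
        simp [map_sub]
      rw [hwv, key]
      have e1 : ‖(fderiv ℝ X (z u) - fderiv ℝ X s) (X (z u))‖ ≤ (M * ‖z u - s‖) * M :=
        le_trans ((fderiv ℝ X (z u) - fderiv ℝ X s).le_opNorm _)
          (mul_le_mul (LDX s (z u)) (B0 _) (norm_nonneg _)
            (by positivity))
      have e2 : ‖(fderiv ℝ X s) (X (z u) - X s)‖ ≤ M * (M * ‖z u - s‖) :=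
        le_trans ((fderiv ℝ X s).le_opNorm _)
          (mul_le_mul (B1 s) (LX s (z u)) (norm_nonneg _) (le_of_lt hM))
      have hzu : ‖z u - s‖ ≤ M * δ :=
        le_trans (zLip u hu) (by nlinarith [hu.2, hM])
      calc ‖(fderiv ℝ X (z u) - fderiv ℝ X s) (X (z u)) + (fderiv ℝ X s) (X (z u) - X s)‖
          ≤ (M * ‖z u - s‖) * M + M * (M * ‖z u - s‖) :=
            le_trans (norm_add_le _ _) (add_le_add e1 e2)
        _ ≤ 2 * M ^ 3 * δ := by
            nlinarith [norm_nonneg (z u - s), hM,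
              mul_le_mul_of_nonneg_left hzu (le_of_lt (mul_pos hM hM))]
    have hψ0 : ψ 0 = 0 := by
      rw [hψ]; simp [hz0, hXs]
    have hψnorm : ∀ u ∈ Set.Icc (0 : ℝ) δ, ‖ψ u‖ ≤ 2 * M ^ 3 * δ * δ := by
      intro u hu
      have := hIcc.norm_image_sub_le_of_norm_hasDerivWithin_le hψd hψbd h0mem hu
      rw [hψ0, sub_zero] at this
      have : ‖ψ u‖ ≤ 2 * M ^ 3 * δ * |u| := by simpa using this
      refine le_trans this ?_
      have h3 : |u| ≤ δ := by rw [abs_of_nonneg hu.1]; exact hu.2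
      have := mul_le_mul_of_nonneg_left h3 (by positivity : (0:ℝ) ≤ 2 * M ^ 3 * δ)
      linarith
    -- first-level function φ
    set φ : ℝ → Esp ds := fun u => z u - s - u • Xbar - (u ^ 2 / 2) • w with hφ
    have hφd : ∀ u ∈ Set.Icc (0 : ℝ) δ, HasDerivWithinAt φ (ψ u) (Set.Icc 0 δ) u := by
      intro u hu
      have h1 : HasDerivWithinAt (fun r : ℝ => r • Xbar) Xbar (Set.Icc 0 δ) u := by
        simpa using ((hasDerivAt_id u).smul_const Xbar).hasDerivWithinAt
      have h2 : HasDerivWithinAt (fun r : ℝ => (r ^ 2 / 2) • w) (u • w) (Set.Icc 0 δ) u := by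
        have : HasDerivAt (fun r : ℝ => (r ^ 2 / 2) • w) (((2 : ℕ) * u ^ 1 / 2) • w) u :=
          ((hasDerivAt_pow 2 u).div_const 2).smul_const w
        simpa using this.hasDerivWithinAt
      have h3 : HasDerivWithinAt (fun r => z r - s) (X (z u)) (Set.Icc 0 δ) u :=
        ((hz u hu).hasDerivWithinAt).sub_const s
      have := (h3.sub h1).sub h2
      exact this
    have hφ0 : φ 0 = 0 := by rw [hφ]; simp [hz0]
    have hφnorm : ‖φ t‖ ≤ 2 * M ^ 3 * δ ^ 3 := by
      have := hIcc.norm_image_sub_le_of_norm_hasDerivWithin_le hφd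
        (fun u hu => hψnorm u hu) h0mem ht
      rw [hφ0, sub_zero] at this
      have h2 : ‖φ t‖ ≤ 2 * M ^ 3 * δ * δ * |t| := by simpa using this
      have h3 : |t| ≤ δ := by rw [abs_of_nonneg ht.1]; exact ht.2
      calc ‖φ t‖ ≤ 2 * M ^ 3 * δ * δ * |t| := h2
        _ ≤ 2 * M ^ 3 * δ ^ 3 := by
            have := mul_le_mul_of_nonneg_left h3 (by positivity : (0:ℝ) ≤ 2 * M ^ 3 * δ * δ)
            nlinarith [hM, hδ]
    -- conclude
    have hv : t • Xbar + (t ^ 2 / 2) • w ∈ attainSpan g h s abar := by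
      rw [hspan]
      exact Submodule.add_mem _ (Submodule.smul_mem _ _ hXbarV) (Submodule.smul_mem _ _ hwV)
    have hmem : s + (t • Xbar + (t ^ 2 / 2) • w) ∈
        (fun v => s + v) '' (attainSpan g h s abar : Set (Esp ds)) :=
      ⟨_, hv, rfl⟩
    refine le_trans (Metric.infDist_le_dist_of_mem hmem) ?_
    rw [dist_eq_norm]
    have : z t - (s + (t • Xbar + (t ^ 2 / 2) • w)) = φ t := by rw [hφ]; abel
    rw [this]
    exact hφnorm
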